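/- Let w, n, s, d be positive integers with s ≥ log w and let ε ∈ (0,1). Suppose there exists a (2s, ε/(3n))-extractor Ext : {0,1}^{3s} × {0,1}^d → {0,1}^s. Then there exists a (3s, 1, ε)-weighted pseudorandom reduction from B(n,s,w) to B(n,d,w). -/

import Mathlib

open Real Finset
open scoped Classical

noncomputable section

/-- Expectation of a real-valued function under the uniform distribution on a finite type. -/
def uniformExp {α : Type*} [Fintype α] (f : α → ℝ) : ℝ :=
  (∑ x, f x) / (Fintype.card α)

/-- A read-once branching program of length `n`, alphabet `{0,1}^s`, width `w`. -/
structure ROBP (n s w : ℕ) where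
  δ : Fin n → Fin w → (Fin s → Bool) → Fin w
  start : Fin w
  accept : Finset (Fin w)

def ROBP.run {n s w : ℕ} (P : ROBP n s w) (x : Fin n → Fin s → Bool) : Fin w :=
  Fin.foldl n (fun v i => P.δ i v (x i)) P.start

def ROBP.fn {n s w : ℕ} (P : ROBP n s w) (x : Fin n → Fin s → Bool) : ℝ :=
  if P.run x ∈ P.accept then 1 else 0

/-- The class of functions computed by ROBPs of length `n`, alphabet `{0,1}^s`, width `w`. -/
def Bclass (n s w : ℕ) : Set ((Fin n → Fin s → Bool) → ℝ) :=
  {f | ∃ P : ROBP n s w, f = P.fn}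

/-- `(G, σ)` is a `W`-bounded `ε`-WPRG for the class `F`. -/
def IsWPRG {n s : ℕ} {ι : Type} [Fintype ι]
    (F : Set ((Fin n → Fin s → Bool) → ℝ))
    (G : ι → Fin n → Fin s → Bool) (σ : ι → ℝ) (W ε : ℝ) : Prop :=
  (∀ r, |σ r| ≤ W) ∧
  ∀ f ∈ F, |uniformExp f - uniformExp (fun r => σ r * f (G r))| ≤ ε

/-- `G` is an `ε`-PRG for the class `F`. -/
def IsPRG {n s : ℕ} {ι : Type} [Fintype ι]
    (F : Set ((Fin n → Fin s → Bool) → ℝ))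
    (G : ι → Fin n → Fin s → Bool) (ε : ℝ) : Prop :=
  ∀ f ∈ F, |uniformExp f - uniformExp (fun r => f (G r))| ≤ ε

/-- `(R, σ)` is a `(log₂ card ι, K, ε)`-weighted pseudorandom reduction from `F₀` to `F₁`. -/
def IsWPR {n₀ s₀ n₁ s₁ : ℕ} {ι : Type} [Fintype ι]
    (F₀ : Set ((Fin n₀ → Fin s₀ → Bool) → ℝ))
    (F₁ : Set ((Fin n₁ → Fin s₁ → Bool) → ℝ))
    (R : (Fin n₁ → Fin s₁ → Bool) → ι → Fin n₀ → Fin s₀ → Bool)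
    (σ : ι → ℝ) (K ε : ℝ) : Prop :=
  (∀ f ∈ F₀,
      |uniformExp f - uniformExp (fun i => σ i * uniformExp (fun x => f (R x i)))| ≤ ε) ∧
  (∀ i, |σ i| ≤ K) ∧
  (∀ f ∈ F₀, ∀ i, (fun x => f (R x i)) ∈ F₁)

def ROBP.Regular {n s w : ℕ} (P : ROBP n s w) : Prop :=
  ∀ (i : Fin n) (v : Fin w),
    (Finset.univ.filter (fun ux : Fin w × (Fin s → Bool) => P.δ i ux.1 ux.2 = v)).card = 2 ^ s

def ROBP.Permutation {n s w : ℕ} (P : ROBP n s w) : Prop :=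
  ∀ (i : Fin n) (x : Fin s → Bool), Function.Bijective (fun u => P.δ i u x)

/-- Regular ROBPs of length `n`, alphabet `{0,1}^s`, width `w`. -/
def Rclass (n s w : ℕ) : Set ((Fin n → Fin s → Bool) → ℝ) :=
  {f | ∃ P : ROBP n s w, P.Regular ∧ f = P.fn}

/-- Permutation ROBPs of length `n` over `{0,1}^s`, unbounded width, a single accept node. -/
def Pclass (n s : ℕ) : Set ((Fin n → Fin s → Bool) → ℝ) :=
  {f | ∃ (w : ℕ) (P : ROBP n s w), P.Permutation ∧ P.accept.card = 1 ∧ f = P.fn}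

/-- Permutation ROBPs of length `n`, alphabet `{0,1}^s`, width `w`, arbitrary accept set. -/
def PermClass (n s w : ℕ) : Set ((Fin n → Fin s → Bool) → ℝ) :=
  {f | ∃ P : ROBP n s w, P.Permutation ∧ f = P.fn}

/-- Run `P` starting from node `v` in layer `i` (only the transitions from layer `i` on are applied). -/
def ROBP.runFrom {n s w : ℕ} (P : ROBP n s w) (i : ℕ) (v : Fin w)
    (x : Fin n → Fin s → Bool) : Fin w :=
  Fin.foldl n (fun u j => if i ≤ (j : ℕ) then P.δ j u (x j) else u) v

/-- Acceptance probability of the subprogram of `P` started at node `v` of layer `i`. -/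
def ROBP.valueAt {n s w : ℕ} (P : ROBP n s w) (i : ℕ) (v : Fin w) : ℝ :=
  uniformExp (fun x : Fin n → Fin s → Bool => if P.runFrom i v x ∈ P.accept then (1 : ℝ) else 0)

/-- The weight `W(f)` of an ROBP: the sum over all edges of the differences of acceptance values. -/
def ROBP.weight {n s w : ℕ} (P : ROBP n s w) : ℝ :=
  ∑ i : Fin n, ∑ u : Fin w, ∑ x : Fin s → Bool,
    |P.valueAt ((i : ℕ) + 1) (P.δ i u x) - P.valueAt (i : ℕ) u|

/-- `(k,ε)`-extractor. -/
def IsExtractor (N d m : ℕ)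
    (Ext : (Fin N → Bool) → (Fin d → Bool) → (Fin m → Bool)) (k ε : ℝ) : Prop :=
  ∀ p : (Fin N → Bool) → ℝ,
    (∀ x, 0 ≤ p x) → (∑ x, p x) = 1 → (∀ x, p x ≤ (2 : ℝ) ^ (-k)) →
    (1 / 2) * ∑ z : Fin m → Bool,
      |(∑ x, ∑ y : Fin d → Bool, p x * (if Ext x y = z then (1 : ℝ) else 0)) / 2 ^ d
        - 1 / 2 ^ m| ≤ ε

/-- `(α,γ)`-averaging sampler. -/
def IsAvgSampler (r p q : ℕ)
    (Samp : (Fin r → Bool) → (Fin p → Bool) → (Fin q → Bool)) (α γ : ℝ) : Prop :=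
  ∀ f : (Fin q → Bool) → ℝ, (∀ z, -1 ≤ f z ∧ f z ≤ 1) →
    (∑ x : Fin r → Bool,
        if α ≤ |(∑ y : Fin p → Bool, f (Samp x y)) / 2 ^ p - uniformExp f| then (1 : ℝ) else 0)
      / 2 ^ r ≤ γ

/-- The matrix norm `‖M‖₁ = max_i Σ_j |M i j|`. -/
def matOneNorm {w : ℕ} (M : Matrix (Fin w) (Fin w) ℝ) : ℝ :=
  ⨆ i, ∑ j, |M i j|

end

noncomputable section WPRAux

lemma foldl_congr_mem {α β : Type*} {l : List α} {g h : β → α → β}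
    (H : ∀ b, ∀ a ∈ l, g b a = h b a) : ∀ v : β, l.foldl g v = l.foldl h v := by
  induction l with
  | nil => intro _; rfl
  | cons a l ih =>
      intro v
      simp only [List.foldl_cons]
      rw [H v a (by simp)]
      exact ih (fun b a ha => H b a (by simp [ha])) _

lemma foldl_id_mem {α β : Type*} {l : List α} {g : β → α → β}
    (H : ∀ b, ∀ a ∈ l, g b a = b) : ∀ v : β, l.foldl g v = v := by
  induction l with
  | nil => intro _; rfl
  | cons a l ih =>
      intro v
      simp only [List.foldl_cons, H v a (by simp)]
      exact ih (fun b a ha => H b a (by simp [ha])) _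

lemma mem_take_finRange {n m : ℕ} {j : Fin n} (hj : j ∈ (List.finRange n).take m) : (j : ℕ) < m := by
  obtain ⟨t, ht, rfl⟩ := List.mem_iff_getElem.1 hj
  simp at ht ⊢
  omega

lemma mem_drop_finRange {n m : ℕ} {j : Fin n} (hj : j ∈ (List.finRange n).drop m) : m ≤ (j : ℕ) := by
  obtain ⟨t, ht, rfl⟩ := List.mem_iff_getElem.1 hj
  simp at ht ⊢

variable {n s w d : ℕ}

def runAux (P : ROBP n s w) (x : Fin n → Fin s → Bool) (l : List (Fin n)) (v : Fin w) : Fin w :=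
  l.foldl (fun u j => P.δ j u (x j)) v

lemma runFrom_eq_runAux (P : ROBP n s w) (m : ℕ) (v : Fin w) (x : Fin n → Fin s → Bool) :
    P.runFrom m v x = runAux P x ((List.finRange n).drop m) v := by
  unfold ROBP.runFrom runAux
  rw [Fin.foldl_eq_foldl_finRange]
  conv_lhs => rw [← List.take_append_drop m (List.finRange n)]
  rw [List.foldl_append]
  rw [foldl_id_mem (fun b a ha => if_neg (by have := mem_take_finRange ha; omega)) v]
  exact foldl_congr_mem (fun b a ha => if_pos (mem_drop_finRange ha)) v

lemma runFrom_step (P : ROBP n s w) {k : ℕ} (hk : k < n) (v : Fin w) (x : Fin n → Fin s → Bool) :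
    P.runFrom k v x = P.runFrom (k+1) (P.δ ⟨k, hk⟩ v (x ⟨k, hk⟩)) x := by
  rw [runFrom_eq_runAux, runFrom_eq_runAux,
    List.drop_eq_getElem_cons (by simpa using hk)]
  have : (List.finRange n)[k]'(by simpa using hk) = ⟨k, hk⟩ := by
    simp [List.getElem_finRange, Fin.cast]
  rw [this]
  rfl

lemma runFrom_congr (P : ROBP n s w) (m : ℕ) (v : Fin w) {x x' : Fin n → Fin s → Bool}
    (h : ∀ j : Fin n, m ≤ (j : ℕ) → x j = x' j) :
    P.runFrom m v x = P.runFrom m v x' := by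
  rw [runFrom_eq_runAux, runFrom_eq_runAux]
  exact foldl_congr_mem (fun b a ha => by rw [h a (mem_drop_finRange ha)]) v

lemma run_eq_runFrom_zero (P : ROBP n s w) (x : Fin n → Fin s → Bool) :
    P.run x = P.runFrom 0 P.start x := by
  unfold ROBP.run ROBP.runFrom
  congr 1

def hybIn (Ext : (Fin (3 * s) → Bool) → (Fin d → Bool) → (Fin s → Bool)) (k : ℕ)
    (i : Fin (3 * s) → Bool) (y : Fin n → Fin d → Bool) (x : Fin n → Fin s → Bool) :
    Fin n → Fin s → Bool :=
  fun j => if (j : ℕ) < k then Ext i (y j) else x j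

def Sst (P : ROBP n s w) (Ext : (Fin (3 * s) → Bool) → (Fin d → Bool) → (Fin s → Bool))
    (i : Fin (3 * s) → Bool) (y : Fin n → Fin d → Bool) : ℕ → Fin w
  | 0 => P.start
  | k + 1 => if h : k < n then
        P.δ ⟨k, h⟩ (Sst P Ext i y k) (Ext i (y ⟨k, h⟩))
      else Sst P Ext i y k

lemma Sst_congr (P : ROBP n s w) (Ext : (Fin (3 * s) → Bool) → (Fin d → Bool) → (Fin s → Bool))
    (i : Fin (3 * s) → Bool) {y y' : Fin n → Fin d → Bool} :
    ∀ k : ℕ, (∀ j : Fin n, (j : ℕ) < k → y j = y' j) → Sst P Ext i y k = Sst P Ext i y' k := by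
  intro k
  induction k with
  | zero => intro _; rfl
  | succ k ih =>
      intro h
      unfold Sst
      split
      · rw [ih (fun j hj => h j (by omega)), h ⟨k, by assumption⟩ (by simp)]
      · exact ih (fun j hj => h j (by omega))

lemma run_hyb (P : ROBP n s w) (Ext : (Fin (3 * s) → Bool) → (Fin d → Bool) → (Fin s → Bool))
    (i : Fin (3 * s) → Bool) (y : Fin n → Fin d → Bool) :
    ∀ k : ℕ, k ≤ n → ∀ x : Fin n → Fin s → Bool,
      P.run (hybIn Ext k i y x) = P.runFrom k (Sst P Ext i y k) x := by
  intro k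
  induction k with
  | zero =>
      intro _ x
      have : hybIn Ext 0 i y x = x := by
        funext j; simp [hybIn]
      rw [this]
      exact run_eq_runFrom_zero P x
  | succ k ih =>
      intro hk x
      have hkn : k < n := by omega
      have e1 : hybIn Ext (k + 1) i y x
          = hybIn Ext k i y (Function.update x ⟨k, hkn⟩ (Ext i (y ⟨k, hkn⟩))) := by
        funext j
        by_cases hj : (j : ℕ) < k
        · have h2 : (j : ℕ) < k + 1 := by omega
          simp [hybIn, hj, h2]
        · by_cases hj2 : j = ⟨k, hkn⟩
          · subst hj2; simp [hybIn]
          · have : ¬ (j : ℕ) < k + 1 := by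
              have : (j : ℕ) ≠ k := fun hc => hj2 (Fin.ext hc)
              omega
            simp [hybIn, hj, this, Function.update_of_ne hj2]
      rw [e1, ih (by omega), runFrom_step P hkn, Function.update_self]
      have e2 : Sst P Ext i y (k + 1) = P.δ ⟨k, hkn⟩ (Sst P Ext i y k) (Ext i (y ⟨k, hkn⟩)) := by
        simp [Sst, hkn]
      rw [e2]
      refine (runFrom_congr P (k + 1) _ (fun j hj => ?_)).symm
      have hne : j ≠ ⟨k, hkn⟩ := by
        intro hc
        rw [hc] at hj
        simp at hj
      exact (Function.update_of_ne hne _ _).symm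

end WPRAux

noncomputable section WPRAux2

lemma sum_coord_factor {m : ℕ} {α : Type*} [Fintype α] (k : Fin m)
    (F : (Fin m → α) → α → ℝ)
    (hF : ∀ y z b, F (Function.update y k b) z = F y z) :
    (Fintype.card α : ℝ) * ∑ y : Fin m → α, F y (y k) = ∑ z : α, ∑ y : Fin m → α, F y z := by
  classical
  set e := Equiv.funSplitAt k α with he
  have hsymm : ∀ (b b' : α) (f : {j // j ≠ k} → α),
      e.symm (b, f) = Function.update (e.symm (b', f)) k b := by
    intro b b' f
    funext j
    by_cases h : j = k
    · subst h; simp [he]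
    · simp [he, h, Function.update_of_ne h]
  have happ : ∀ (b : α) (f : {j // j ≠ k} → α), e.symm (b, f) k = b := by
    intro b f; simp [he]
  have hL : ∑ y : Fin m → α, F y (y k)
      = ∑ b : α, ∑ f : {j // j ≠ k} → α, F (e.symm (b, f)) b := by
    rw [← Equiv.sum_comp e.symm (fun y => F y (y k)), Fintype.sum_prod_type]
    exact Finset.sum_congr rfl fun b _ => Finset.sum_congr rfl fun f _ => by rw [happ]
  have hR : ∀ z : α, ∑ y : Fin m → α, F y z
      = (Fintype.card α : ℝ) * ∑ f : {j // j ≠ k} → α, F (e.symm (z, f)) z := by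
    intro z
    rw [← Equiv.sum_comp e.symm (fun y => F y z), Fintype.sum_prod_type]
    have : ∀ b : α, ∑ f : {j // j ≠ k} → α, F (e.symm (b, f)) z
        = ∑ f : {j // j ≠ k} → α, F (e.symm (z, f)) z := by
      intro b
      refine Finset.sum_congr rfl fun f _ => ?_
      rw [hsymm b z f, hF]
    rw [Finset.sum_congr rfl fun b _ => this b, Finset.sum_const, Finset.card_univ,
      nsmul_eq_mul]
  rw [hL, Finset.mul_sum]
  rw [Finset.sum_congr rfl fun z _ => hR z]

lemma abs_sum_weighted_le {β : Type*} [Fintype β] (g Δ : β → ℝ)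
    (hg : ∀ z, 0 ≤ g z ∧ g z ≤ 1) (hΔ : ∑ z, Δ z = 0) :
    |∑ z, g z * Δ z| ≤ (1 / 2) * ∑ z, |Δ z| := by
  have e1 : ∑ z, (|Δ z| + Δ z) / 2 = (1 / 2) * ∑ z, |Δ z| := by
    rw [← Finset.sum_div, Finset.sum_add_distrib, hΔ]; ring
  have e2 : ∑ z, (Δ z - |Δ z|) / 2 = -((1 / 2) * ∑ z, |Δ z|) := by
    rw [← Finset.sum_div, Finset.sum_sub_distrib, hΔ]; ring
  rw [abs_le]
  constructor
  · rw [← e2]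
    refine Finset.sum_le_sum fun z _ => ?_
    rcases abs_cases (Δ z) with ⟨h, _⟩ | ⟨h, _⟩ <;> nlinarith [(hg z).1, (hg z).2]
  · rw [← e1]
    refine Finset.sum_le_sum fun z _ => ?_
    rcases abs_cases (Δ z) with ⟨h, _⟩ | ⟨h, _⟩ <;> nlinarith [(hg z).1, (hg z).2]

lemma extractor_density_bound {N d m : ℕ}
    (Ext : (Fin N → Bool) → (Fin d → Bool) → (Fin m → Bool)) (k ε' : ℝ)
    (hExt : IsExtractor N d m Ext k ε')
    (p : (Fin N → Bool) → ℝ) (hp0 : ∀ i, 0 ≤ p i) (hp1 : ∑ i, p i = 1)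
    (hpb : ∀ i, p i ≤ (2 : ℝ) ^ (-k))
    (g : (Fin m → Bool) → ℝ) (hg : ∀ z, 0 ≤ g z ∧ g z ≤ 1) :
    |∑ i, p i * ((∑ z' : Fin d → Bool, g (Ext i z')) / 2 ^ d
        - (∑ z : Fin m → Bool, g z) / 2 ^ m)| ≤ ε' := by
  have cardm : (Fintype.card (Fin m → Bool) : ℝ) = 2 ^ m := by simp
  have cardd : (Fintype.card (Fin d → Bool) : ℝ) = 2 ^ d := by simp
  set S : (Fin m → Bool) → ℝ := fun z =>
    ∑ i, ∑ z' : Fin d → Bool, p i * (if Ext i z' = z then (1 : ℝ) else 0) with hS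
  set Δ : (Fin m → Bool) → ℝ := fun z => S z / 2 ^ d - 1 / 2 ^ m with hΔdef
  have hUND : ∑ z, g z * S z = ∑ i, p i * (∑ z' : Fin d → Bool, g (Ext i z')) := by
    have step1 : ∑ z, g z * S z
        = ∑ z, ∑ i, ∑ z' : Fin d → Bool, p i * (if Ext i z' = z then g z else 0) := by
      refine Finset.sum_congr rfl fun z _ => ?_
      rw [hS, Finset.mul_sum]
      refine Finset.sum_congr rfl fun i _ => ?_
      rw [Finset.mul_sum]
      refine Finset.sum_congr rfl fun z' _ => by split <;> ring
    rw [step1, Finset.sum_comm]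
    refine Finset.sum_congr rfl fun i _ => ?_
    rw [Finset.sum_comm, Finset.mul_sum]
    refine Finset.sum_congr rfl fun z' _ => ?_
    rw [← Finset.mul_sum]
    congr 1
    simp
  have hSsum : ∑ z, S z = 2 ^ d := by
    have : ∀ i, ∑ z : Fin m → Bool, ∑ z' : Fin d → Bool,
        p i * (if Ext i z' = z then (1 : ℝ) else 0) = p i * 2 ^ d := by
      intro i
      rw [Finset.sum_comm]
      have h2 : ∀ z' : Fin d → Bool,
          ∑ z : Fin m → Bool, p i * (if Ext i z' = z then (1 : ℝ) else 0) = p i := by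
        intro z'
        rw [← Finset.mul_sum]
        simp
      rw [Finset.sum_congr rfl fun z' _ => h2 z', Finset.sum_const, Finset.card_univ,
        nsmul_eq_mul, ← cardd]
      ring
    rw [hS]
    simp only
    rw [Finset.sum_comm, Finset.sum_congr rfl fun i _ => this i, ← Finset.sum_mul, hp1, one_mul]
  have hΔsum : ∑ z, Δ z = 0 := by
    rw [hΔdef]
    simp only
    rw [Finset.sum_sub_distrib, ← Finset.sum_div, hSsum, Finset.sum_const, Finset.card_univ,
      nsmul_eq_mul, cardm]
    have h1 : (0:ℝ) < 2 ^ d := by positivity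
    have h2 : (0:ℝ) < 2 ^ m := by positivity
    field_simp
    ring
  have hrepr : ∑ i, p i * ((∑ z' : Fin d → Bool, g (Ext i z')) / 2 ^ d
      - (∑ z : Fin m → Bool, g z) / 2 ^ m) = ∑ z, g z * Δ z := by
    have rhs : ∑ z, g z * Δ z
        = (∑ z, g z * S z) / 2 ^ d - (∑ z, g z) / 2 ^ m := by
      rw [hΔdef]
      simp only
      rw [Finset.sum_congr rfl fun z _ => mul_sub (g z) (S z / 2 ^ d) (1 / 2 ^ m),
        Finset.sum_sub_distrib]
      congr 1
      · rw [Finset.sum_div]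
        exact Finset.sum_congr rfl fun z _ => (mul_div_assoc _ _ _).symm
      · rw [Finset.sum_div]
        exact Finset.sum_congr rfl fun z _ => by ring
    rw [rhs, hUND]
    rw [Finset.sum_congr rfl fun i _ => mul_sub (p i) _ _, Finset.sum_sub_distrib]
    congr 1
    · rw [Finset.sum_div]
      exact Finset.sum_congr rfl fun i _ => (mul_div_assoc _ _ _).symm
    · rw [← Finset.sum_mul, hp1, one_mul]
  have hext := hExt p hp0 hp1 hpb
  rw [hrepr]
  calc |∑ z, g z * Δ z| ≤ (1 / 2) * ∑ z, |Δ z| := abs_sum_weighted_le g Δ hg hΔsum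
    _ ≤ ε' := by rw [hΔdef]; simp only [hS]; exact hext

end WPRAux2

noncomputable section WPRAux3

set_option maxHeartbeats 1000000 in
lemma key_layer {w s dd : ℕ} (hw : 0 < w) (hs : 0 < s) (hwle : w ≤ 2 ^ s)
    {ε' : ℝ} (hε' : 0 ≤ ε')
    (Ext : (Fin (3 * s) → Bool) → (Fin dd → Bool) → (Fin s → Bool))
    (hExt : IsExtractor (3 * s) dd s Ext (2 * (s : ℝ)) ε')
    (cY : ℝ) (hcY : 0 < cY)
    (N : Fin w → (Fin (3 * s) → Bool) → ℝ)
    (hN0 : ∀ v i, 0 ≤ N v i)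
    (hNsum : ∀ i, ∑ v, N v i = cY)
    (g : Fin w → (Fin s → Bool) → ℝ) (hg : ∀ v z, 0 ≤ g v z ∧ g v z ≤ 1) :
    |∑ v, ∑ i, N v i * ((∑ z' : Fin dd → Bool, g v (Ext i z')) / 2 ^ dd
        - (∑ z : Fin s → Bool, g v z) / 2 ^ s)|
      ≤ 3 * ε' * (2 ^ (3 * s) * cY) := by
  classical
  haveI : Nonempty (Fin w) := ⟨⟨0, hw⟩⟩
  set c3 : ℝ := 2 ^ (3 * s) with hc3def
  have hc3 : (0:ℝ) < c3 := by positivity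
  have hc3' : c3 ≠ 0 := ne_of_gt hc3
  have hcard3 : (Fintype.card (Fin (3 * s) → Bool) : ℝ) = c3 := by simp [hc3def]
  have h2s : (0:ℝ) < 2 ^ s := by positivity
  have h2s1 : (0:ℝ) < 2 ^ s - 1 := by
    have h0 : (2:ℝ) ^ 0 < 2 ^ s := pow_lt_pow_right₀ (by norm_num) (by omega)
    simpa using h0
  have hwR : (w:ℝ) ≤ 2 ^ s := by exact_mod_cast hwle
  have hwR0 : (0:ℝ) < w := by exact_mod_cast hw
  have hpow : (2:ℝ) ^ (-(2 * (s:ℝ))) = 2 ^ s / c3 := by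
    have h1 : (2:ℝ) ^ (-(2 * (s:ℝ))) = ((2:ℝ) ^ (2 * s : ℕ))⁻¹ := by
      rw [show (2 * (s:ℝ)) = ((2 * s : ℕ) : ℝ) by push_cast; ring,
        Real.rpow_neg (by norm_num), Real.rpow_natCast]
    rw [h1, hc3def, show 3 * s = s + 2 * s by ring, pow_add]
    rw [eq_div_iff (by positivity)]
    field_simp
  set D : Fin w → (Fin (3 * s) → Bool) → ℝ := fun v i =>
    (∑ z' : Fin dd → Bool, g v (Ext i z')) / 2 ^ dd
      - (∑ z : Fin s → Bool, g v z) / 2 ^ s with hDdef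
  have EXT' : ∀ (v : Fin w) (p : (Fin (3 * s) → Bool) → ℝ), (∀ i, 0 ≤ p i) →
      (∑ i, p i) = 1 → (∀ i, p i ≤ 2 ^ s / c3) → |∑ i, p i * D v i| ≤ ε' := by
    intro v p hp0 hp1 hpb
    exact extractor_density_bound Ext (2 * (s:ℝ)) ε' hExt p hp0 hp1
      (fun i => by rw [hpow]; exact hpb i) (g v) (hg v)
  set M : Fin w → ℝ := fun v => ∑ i, N v i with hMdef
  have hM0 : ∀ v, 0 ≤ M v := fun v => Finset.sum_nonneg fun i _ => hN0 v i
  have hMsum : ∑ v, M v = c3 * cY := by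
    rw [hMdef]
    simp only
    rw [Finset.sum_comm, Finset.sum_congr rfl fun i _ => hNsum i, Finset.sum_const,
      Finset.card_univ, nsmul_eq_mul, hcard3]
  have hNle : ∀ v i, N v i ≤ cY := by
    intro v i
    rw [← hNsum i]
    exact Finset.single_le_sum (fun v' _ => hN0 v' i) (Finset.mem_univ v)
  set Dsum : Fin w → ℝ := fun v => ∑ i, N v i * D v i with hDsumdef
  have claim_high : ∀ v, (c3 * cY) / 2 ^ s ≤ M v → |Dsum v| ≤ ε' * M v := by
    intro v hv
    have hMv : 0 < M v := lt_of_lt_of_le (by positivity) hv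
    have hrw : Dsum v = M v * ∑ i, (N v i / M v) * D v i := by
      rw [hDsumdef, Finset.mul_sum]
      exact Finset.sum_congr rfl fun i _ => by field_simp
    have hb := EXT' v (fun i => N v i / M v)
      (fun i => div_nonneg (hN0 v i) (hM0 v))
      (by rw [← Finset.sum_div, show (∑ i, N v i) = M v from rfl]
          exact div_self (ne_of_gt hMv))
      (fun i => by
        have h1 : N v i / M v ≤ cY / M v := (div_le_div_iff_of_pos_right hMv).mpr (hNle v i)
        have h2 : cY / M v ≤ 2 ^ s / c3 := by
          rw [div_le_div_iff₀ hMv hc3]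
          have h3 : c3 * cY ≤ M v * 2 ^ s := (div_le_iff₀ h2s).mp hv
          nlinarith
        exact le_trans h1 h2)
    rw [hrw, abs_mul, abs_of_nonneg (hM0 v)]
    calc M v * |∑ i, N v i / M v * D v i| ≤ M v * ε' :=
          mul_le_mul_of_nonneg_left hb (hM0 v)
      _ = ε' * M v := by ring
  have claim_low : ∀ v, 0 < M v → M v < (c3 * cY) / 2 ^ s →
      |Dsum v| ≤ 2 * ε' * (c3 * cY) / (2 ^ s - 1) := by
    intro v hMv hv
    have hM' : M v ≠ 0 := ne_of_gt hMv
    set lam : ℝ := M v * (2 ^ s - 1) / (c3 * cY) with hlam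
    have hlam0 : 0 < lam := div_pos (mul_pos hMv h2s1) (mul_pos hc3 hcY)
    have hlam1 : lam < 1 := by
      rw [hlam, div_lt_one (mul_pos hc3 hcY)]
      have h4 := (lt_div_iff₀ h2s).mp hv
      nlinarith
    set pt : (Fin (3 * s) → Bool) → ℝ := fun i => lam * (N v i / M v) + (1 - lam) / c3
      with hpt
    have hpt1 : ∑ i, pt i = 1 := by
      rw [hpt]
      rw [Finset.sum_add_distrib, ← Finset.mul_sum, ← Finset.sum_div,
        show (∑ i, N v i) = M v from rfl, Finset.sum_const, Finset.card_univ, nsmul_eq_mul,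
        hcard3, div_self hM']
      field_simp
      ring
    have hptb : ∀ i, pt i ≤ 2 ^ s / c3 := by
      intro i
      have h1 : N v i / M v ≤ cY / M v := (div_le_div_iff_of_pos_right hMv).mpr (hNle v i)
      have h2 : lam * (N v i / M v) ≤ lam * (cY / M v) :=
        mul_le_mul_of_nonneg_left h1 hlam0.le
      have h3 : lam * (cY / M v) = (2 ^ s - 1) / c3 := by
        rw [hlam]
        field_simp
      have h4 : (1 - lam) / c3 ≤ 1 / c3 := (div_le_div_iff_of_pos_right hc3).mpr (by linarith)
      have h5 : (2 ^ s - 1) / c3 + 1 / c3 = 2 ^ s / c3 := by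
        rw [← add_div]
        norm_num
      rw [hpt]
      simp only
      linarith
    have hpt0 : ∀ i, 0 ≤ pt i := by
      intro i
      rw [hpt]
      have h1 : 0 ≤ N v i / M v := div_nonneg (hN0 v i) (hM0 v)
      have h2 : 0 ≤ (1 - lam) / c3 := div_nonneg (by linarith) hc3.le
      simp only
      nlinarith [hlam0]
    set pu : (Fin (3 * s) → Bool) → ℝ := fun _ => 1 / c3 with hpu
    have hA := EXT' v pt hpt0 hpt1 hptb
    have hB := EXT' v pu (fun i => by rw [hpu]; positivity)
      (by rw [hpu, Finset.sum_const, Finset.card_univ, nsmul_eq_mul, hcard3]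
          field_simp)
      (fun i => by
        rw [hpu]
        simp only
        exact (div_le_div_iff_of_pos_right hc3).mpr (by linarith [h2s1]))
    have hrel : ∑ i, pt i * D v i
        = (lam / M v) * Dsum v + (1 - lam) * ∑ i, pu i * D v i := by
      rw [hpt, hpu, hDsumdef]
      simp only
      rw [Finset.mul_sum, Finset.mul_sum, ← Finset.sum_add_distrib]
      refine Finset.sum_congr rfl fun i _ => ?_
      field_simp
    have hDs : Dsum v = (M v / lam) * ((∑ i, pt i * D v i)
        - (1 - lam) * ∑ i, pu i * D v i) := by
      rw [hrel]
      field_simp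
      ring
    have habs : |(∑ i, pt i * D v i) - (1 - lam) * ∑ i, pu i * D v i| ≤ 2 * ε' := by
      have t1 : |(∑ i, pt i * D v i) - (1 - lam) * ∑ i, pu i * D v i|
          ≤ |∑ i, pt i * D v i| + |(1 - lam) * ∑ i, pu i * D v i| := by
        rw [sub_eq_add_neg]
        exact le_trans (abs_add_le _ _) (by rw [abs_neg])
      have t2 : |(1 - lam) * ∑ i, pu i * D v i| = (1 - lam) * |∑ i, pu i * D v i| := by
        rw [abs_mul, abs_of_nonneg (by linarith : (0:ℝ) ≤ 1 - lam)]
      have t3 : (1 - lam) * |∑ i, pu i * D v i| ≤ (1 - lam) * ε' :=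
        mul_le_mul_of_nonneg_left hB (by linarith)
      have t4 : (1 - lam) * ε' ≤ ε' := by nlinarith [mul_nonneg hlam0.le hε']
      linarith [t1, t2.le, t2.ge, hA]
    have hMl : M v / lam = (c3 * cY) / (2 ^ s - 1) := by
      rw [hlam]
      field_simp
    rw [hDs, abs_mul, abs_of_nonneg (div_pos hMv hlam0).le, hMl]
    calc (c3 * cY) / (2 ^ s - 1) * |(∑ i, pt i * D v i)
          - (1 - lam) * ∑ i, pu i * D v i|
        ≤ (c3 * cY) / (2 ^ s - 1) * (2 * ε') :=
          mul_le_mul_of_nonneg_left habs (div_nonneg (mul_pos hc3 hcY).le h2s1.le)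
      _ = 2 * ε' * (c3 * cY) / (2 ^ s - 1) := by ring
  have hvstar : ∃ vs : Fin w, (c3 * cY) / w ≤ M vs := by
    by_contra hcon
    push_neg at hcon
    have hlt : ∑ v, M v < ∑ _v : Fin w, (c3 * cY) / w :=
      Finset.sum_lt_sum_of_nonempty Finset.univ_nonempty (fun v _ => hcon v)
    rw [hMsum, Finset.sum_const, Finset.card_univ, Fintype.card_fin, nsmul_eq_mul] at hlt
    have heq : (w:ℝ) * ((c3 * cY) / w) = c3 * cY := by field_simp
    rw [heq] at hlt
    exact lt_irrefl _ hlt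
  obtain ⟨vs, hvs⟩ := hvstar
  have hvshigh : (c3 * cY) / 2 ^ s ≤ M vs := by
    refine le_trans ?_ hvs
    rw [div_le_div_iff₀ h2s hwR0]
    nlinarith [mul_le_mul_of_nonneg_left hwR (le_of_lt (mul_pos hc3 hcY))]
  set C : ℝ := 2 * ε' * (c3 * cY) / (2 ^ s - 1) with hC
  have hC0 : 0 ≤ C := by
    rw [hC]
    exact div_nonneg (mul_nonneg (mul_nonneg (by norm_num) hε') (mul_pos hc3 hcY).le) h2s1.le
  have perv : ∀ v, |Dsum v| ≤ ε' * M v + (if v = vs then 0 else C) := by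
    intro v
    by_cases hv : (c3 * cY) / 2 ^ s ≤ M v
    · have h1 := claim_high v hv
      have h2 : 0 ≤ (if v = vs then (0:ℝ) else C) := by
        split
        · exact le_refl 0
        · exact hC0
      linarith
    · push_neg at hv
      have hvne : v ≠ vs := fun h => absurd hvshigh (by rw [← h]; exact not_le.mpr hv)
      rw [if_neg hvne]
      rcases eq_or_lt_of_le (hM0 v) with h0 | h0
      · have hN : ∀ i, N v i = 0 := by
          intro i
          exact (Finset.sum_eq_zero_iff_of_nonneg (fun i _ => hN0 v i)).mp h0.symm i
            (Finset.mem_univ i)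
        have hz : Dsum v = 0 := by
          rw [hDsumdef]
          simp only
          exact Finset.sum_eq_zero fun i _ => by rw [hN i, zero_mul]
        rw [hz, abs_zero]
        have : 0 ≤ ε' * M v := mul_nonneg hε' (hM0 v)
        linarith
      · have h1 := claim_low v h0 hv
        have h2 : 0 ≤ ε' * M v := mul_nonneg hε' (hM0 v)
        linarith
  have final1 : ∑ v, (ε' * M v + (if v = vs then 0 else C))
      = ε' * (c3 * cY) + ((w:ℝ) - 1) * C := by
    rw [Finset.sum_add_distrib, ← Finset.mul_sum, hMsum]
    congr 1
    have hsplit : ∀ v : Fin w, (if v = vs then (0:ℝ) else C)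
        = C - (if v = vs then C else 0) := by
      intro v
      split <;> ring
    rw [Finset.sum_congr rfl fun v _ => hsplit v, Finset.sum_sub_distrib, Finset.sum_const,
      Finset.card_univ, Fintype.card_fin, nsmul_eq_mul]
    have hone : ∑ v : Fin w, (if v = vs then C else 0) = C := by simp
    rw [hone]
    ring
  have hw1 : (1:ℝ) ≤ w := by exact_mod_cast hw
  have hlast : ((w:ℝ) - 1) * C ≤ 2 * ε' * (c3 * cY) := by
    rw [hC]
    calc ((w:ℝ) - 1) * (2 * ε' * (c3 * cY) / (2 ^ s - 1))
        ≤ (2 ^ s - 1) * (2 * ε' * (c3 * cY) / (2 ^ s - 1)) := by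
          apply mul_le_mul_of_nonneg_right (by linarith)
          exact div_nonneg (mul_nonneg (mul_nonneg (by norm_num) hε') (mul_pos hc3 hcY).le)
            h2s1.le
      _ = 2 * ε' * (c3 * cY) := by field_simp
  calc |∑ v, ∑ i, N v i * ((∑ z' : Fin dd → Bool, g v (Ext i z')) / 2 ^ dd
        - (∑ z : Fin s → Bool, g v z) / 2 ^ s)|
      = |∑ v, Dsum v| := rfl
    _ ≤ ∑ v, |Dsum v| := Finset.abs_sum_le_sum_abs _ _
    _ ≤ ∑ v, (ε' * M v + (if v = vs then 0 else C)) := Finset.sum_le_sum fun v _ => perv v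
    _ = ε' * (c3 * cY) + ((w:ℝ) - 1) * C := final1
    _ ≤ ε' * (c3 * cY) + 2 * ε' * (c3 * cY) := by linarith
    _ = 3 * ε' * (c3 * cY) := by ring

end WPRAux3

noncomputable section WPRAux4

set_option maxHeartbeats 1600000 in
lemma step_bound {w n s d : ℕ} (hw : 0 < w) (hs : 0 < s) (hwle : w ≤ 2 ^ s)
    {ε' : ℝ} (hε' : 0 ≤ ε')
    (Ext : (Fin (3 * s) → Bool) → (Fin d → Bool) → (Fin s → Bool))
    (hExt : IsExtractor (3 * s) d s Ext (2 * (s : ℝ)) ε')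
    (P : ROBP n s w) {k : ℕ} (hk : k < n) :
    |(∑ i : Fin (3 * s) → Bool, ∑ y : Fin n → Fin d → Bool, ∑ x : Fin n → Fin s → Bool,
        P.fn (hybIn Ext (k + 1) i y x))
      - (∑ i : Fin (3 * s) → Bool, ∑ y : Fin n → Fin d → Bool, ∑ x : Fin n → Fin s → Bool,
        P.fn (hybIn Ext k i y x))|
      ≤ 3 * ε' * ((2 : ℝ) ^ (3 * s) * (Fintype.card (Fin n → Fin d → Bool))
          * (Fintype.card (Fin n → Fin s → Bool))) := by
  classical
  set cx : ℝ := (Fintype.card (Fin n → Fin s → Bool) : ℝ) with hcx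
  set cy : ℝ := (Fintype.card (Fin n → Fin d → Bool) : ℝ) with hcy
  have hcx0 : 0 < cx := by rw [hcx]; exact_mod_cast Fintype.card_pos
  have hcy0 : 0 < cy := by rw [hcy]; exact_mod_cast Fintype.card_pos
  have hcs : (Fintype.card (Fin s → Bool) : ℝ) = 2 ^ s := by simp
  have hcd : (Fintype.card (Fin d → Bool) : ℝ) = 2 ^ d := by simp
  have h2s0 : (0:ℝ) < 2 ^ s := by positivity
  have h2d0 : (0:ℝ) < 2 ^ d := by positivity
  set V : ℕ → Fin w → ℝ := fun m u =>
    ∑ x : Fin n → Fin s → Bool, (if P.runFrom m u x ∈ P.accept then (1:ℝ) else 0) with hVdef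
  set N : Fin w → (Fin (3 * s) → Bool) → ℝ := fun v i =>
    ∑ y : Fin n → Fin d → Bool, (if Sst P Ext i y k = v then (1:ℝ) else 0) with hNdef
  set g : Fin w → (Fin s → Bool) → ℝ := fun v z => V (k + 1) (P.δ ⟨k, hk⟩ v z) / cx with hgdef
  -- inner x-sum identification
  have hinner : ∀ m, m ≤ n → ∀ (i : Fin (3 * s) → Bool) (y : Fin n → Fin d → Bool),
      (∑ x : Fin n → Fin s → Bool, P.fn (hybIn Ext m i y x)) = V m (Sst P Ext i y m) := by
    intro m hm i y
    refine Finset.sum_congr rfl fun x _ => ?_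
    show (if P.run (hybIn Ext m i y x) ∈ P.accept then (1:ℝ) else 0) = _
    rw [run_hyb P Ext i y m hm x]
  -- V bounds
  have hV0 : ∀ m u, 0 ≤ V m u := by
    intro m u
    rw [hVdef]
    refine Finset.sum_nonneg fun x _ => by split <;> norm_num
  have hVle : ∀ m u, V m u ≤ cx := by
    intro m u
    rw [hVdef, hcx]
    calc (∑ x : Fin n → Fin s → Bool, if P.runFrom m u x ∈ P.accept then (1:ℝ) else 0)
        ≤ ∑ _x : Fin n → Fin s → Bool, (1:ℝ) :=
          Finset.sum_le_sum fun x _ => by split <;> norm_num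
      _ = (Fintype.card (Fin n → Fin s → Bool) : ℝ) := by
          rw [Finset.sum_const, Finset.card_univ, nsmul_eq_mul, mul_one]
  -- recurrence for V
  have hrecur : ∀ v : Fin w, V k v = (∑ z : Fin s → Bool, V (k + 1) (P.δ ⟨k, hk⟩ v z)) / 2 ^ s := by
    intro v
    have hF : ∀ (x : Fin n → Fin s → Bool) (z b : Fin s → Bool),
        (if P.runFrom (k + 1) (P.δ ⟨k, hk⟩ v z) (Function.update x ⟨k, hk⟩ b) ∈ P.accept
          then (1:ℝ) else 0)
          = (if P.runFrom (k + 1) (P.δ ⟨k, hk⟩ v z) x ∈ P.accept then (1:ℝ) else 0) := by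
      intro x z b
      rw [runFrom_congr P (k + 1) (P.δ ⟨k, hk⟩ v z)
        (fun j hj => Function.update_of_ne (fun hc => by rw [hc] at hj; simp at hj) _ _)]
    have key : (Fintype.card (Fin s → Bool) : ℝ)
        * ∑ x : Fin n → Fin s → Bool,
            (if P.runFrom (k + 1) (P.δ ⟨k, hk⟩ v (x ⟨k, hk⟩)) x ∈ P.accept then (1:ℝ) else 0)
        = ∑ z : Fin s → Bool, ∑ x : Fin n → Fin s → Bool,
            (if P.runFrom (k + 1) (P.δ ⟨k, hk⟩ v z) x ∈ P.accept then (1:ℝ) else 0) :=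
      sum_coord_factor (⟨k, hk⟩ : Fin n)
        (fun x z => if P.runFrom (k + 1) (P.δ ⟨k, hk⟩ v z) x ∈ P.accept then (1:ℝ) else 0)
        (fun x z b => hF x z b)
    have hL : ∑ x : Fin n → Fin s → Bool,
        (if P.runFrom (k + 1) (P.δ ⟨k, hk⟩ v (x ⟨k, hk⟩)) x ∈ P.accept then (1:ℝ) else 0)
        = V k v := by
      rw [hVdef]
      refine Finset.sum_congr rfl fun x _ => ?_
      rw [← runFrom_step P hk v x]
    have hR : (∑ z : Fin s → Bool, ∑ x : Fin n → Fin s → Bool,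
        (if P.runFrom (k + 1) (P.δ ⟨k, hk⟩ v z) x ∈ P.accept then (1:ℝ) else 0))
        = ∑ z : Fin s → Bool, V (k + 1) (P.δ ⟨k, hk⟩ v z) := by
      exact Finset.sum_congr rfl fun z _ => by rw [hVdef]
    rw [hL, hR, hcs] at key
    rw [eq_div_iff (ne_of_gt h2s0)]
    linarith [key]
  -- grouping by the intermediate state
  have hgroup : ∀ (c : Fin w → ℝ) (i : Fin (3 * s) → Bool),
      ∑ y : Fin n → Fin d → Bool, c (Sst P Ext i y k) = ∑ v, N v i * c v := by
    intro c i
    have h1 : ∀ y : Fin n → Fin d → Bool,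
        c (Sst P Ext i y k) = ∑ v, (if Sst P Ext i y k = v then (1:ℝ) else 0) * c v := by
      intro y
      rw [Finset.sum_congr rfl fun v _ => ite_zero_mul (Sst P Ext i y k = v) (1:ℝ) (c v)]
      simp
    rw [Finset.sum_congr rfl fun y _ => h1 y, Finset.sum_comm]
    refine Finset.sum_congr rfl fun v _ => ?_
    rw [hNdef, ← Finset.sum_mul]
  -- expression for layer k
  have hAk : ∀ i : Fin (3 * s) → Bool,
      ∑ y : Fin n → Fin d → Bool, V k (Sst P Ext i y k)
        = ∑ v, N v i * ((∑ z : Fin s → Bool, V (k + 1) (P.δ ⟨k, hk⟩ v z)) / 2 ^ s) := by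
    intro i
    have h2 : ∑ y : Fin n → Fin d → Bool, V k (Sst P Ext i y k) = ∑ v, N v i * V k v :=
      hgroup (fun v => V k v) i
    rw [h2]
    exact Finset.sum_congr rfl fun v _ => by rw [hrecur v]
  -- expression for layer k+1
  have hAk1 : ∀ i : Fin (3 * s) → Bool,
      ∑ y : Fin n → Fin d → Bool, V (k + 1) (Sst P Ext i y (k + 1))
        = ∑ v, N v i * ((∑ z' : Fin d → Bool, V (k + 1) (P.δ ⟨k, hk⟩ v (Ext i z'))) / 2 ^ d) := by
    intro i
    have h1 : ∀ y : Fin n → Fin d → Bool,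
        Sst P Ext i y (k + 1) = P.δ ⟨k, hk⟩ (Sst P Ext i y k) (Ext i (y ⟨k, hk⟩)) := by
      intro y
      simp [Sst, hk]
    rw [Finset.sum_congr rfl fun y _ => by rw [h1 y]]
    have hshift : (Fintype.card (Fin d → Bool) : ℝ)
        * ∑ y : Fin n → Fin d → Bool,
            V (k + 1) (P.δ ⟨k, hk⟩ (Sst P Ext i y k) (Ext i (y ⟨k, hk⟩)))
        = ∑ z' : Fin d → Bool, ∑ y : Fin n → Fin d → Bool,
            V (k + 1) (P.δ ⟨k, hk⟩ (Sst P Ext i y k) (Ext i z')) := by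
      refine sum_coord_factor (⟨k, hk⟩ : Fin n)
        (fun y z' => V (k + 1) (P.δ ⟨k, hk⟩ (Sst P Ext i y k) (Ext i z'))) ?_
      intro y z' b
      show V (k + 1) (P.δ ⟨k, hk⟩ (Sst P Ext i (Function.update y ⟨k, hk⟩ b) k) (Ext i z'))
          = V (k + 1) (P.δ ⟨k, hk⟩ (Sst P Ext i y k) (Ext i z'))
      have hS : Sst P Ext i (Function.update y ⟨k, hk⟩ b) k = Sst P Ext i y k :=
        Sst_congr P Ext i k
          (fun j hj => Function.update_of_ne (fun hc => by rw [hc] at hj; simp at hj) _ _)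
      rw [hS]
    have hswap : ∑ z' : Fin d → Bool, ∑ y : Fin n → Fin d → Bool,
        V (k + 1) (P.δ ⟨k, hk⟩ (Sst P Ext i y k) (Ext i z'))
        = ∑ v, N v i * (∑ z' : Fin d → Bool, V (k + 1) (P.δ ⟨k, hk⟩ v (Ext i z'))) := by
      have h3 : ∀ z' : Fin d → Bool,
          ∑ y : Fin n → Fin d → Bool, V (k + 1) (P.δ ⟨k, hk⟩ (Sst P Ext i y k) (Ext i z'))
            = ∑ v, N v i * V (k + 1) (P.δ ⟨k, hk⟩ v (Ext i z')) := fun z' =>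
        hgroup (fun v => V (k + 1) (P.δ ⟨k, hk⟩ v (Ext i z'))) i
      rw [Finset.sum_congr rfl fun z' _ => h3 z', Finset.sum_comm]
      exact Finset.sum_congr rfl fun v _ => by rw [← Finset.mul_sum]
    have hdiv : ∑ y : Fin n → Fin d → Bool,
        V (k + 1) (P.δ ⟨k, hk⟩ (Sst P Ext i y k) (Ext i (y ⟨k, hk⟩)))
        = (∑ v, N v i * (∑ z' : Fin d → Bool, V (k + 1) (P.δ ⟨k, hk⟩ v (Ext i z')))) / 2 ^ d := by
      rw [← hswap, ← hshift, hcd]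
      field_simp
    rw [hdiv, Finset.sum_div]
    exact Finset.sum_congr rfl fun v _ => (mul_div_assoc _ _ _)
  -- the difference as cx times the key sum
  have hVg : ∀ (v : Fin w) (z : Fin s → Bool),
      V (k + 1) (P.δ ⟨k, hk⟩ v z) = g v z * cx := by
    intro v z
    rw [hgdef]
    field_simp
  have hterm : ∀ (v : Fin w) (i : Fin (3 * s) → Bool),
      N v i * ((∑ z' : Fin d → Bool, V (k + 1) (P.δ ⟨k, hk⟩ v (Ext i z'))) / 2 ^ d)
        - N v i * ((∑ z : Fin s → Bool, V (k + 1) (P.δ ⟨k, hk⟩ v z)) / 2 ^ s)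
        = cx * (N v i * ((∑ z' : Fin d → Bool, g v (Ext i z')) / 2 ^ d
            - (∑ z : Fin s → Bool, g v z) / 2 ^ s)) := by
    intro v i
    have e1 : ∑ z' : Fin d → Bool, V (k + 1) (P.δ ⟨k, hk⟩ v (Ext i z'))
        = (∑ z' : Fin d → Bool, g v (Ext i z')) * cx := by
      rw [Finset.sum_mul]
      exact Finset.sum_congr rfl fun z' _ => hVg v (Ext i z')
    have e2 : ∑ z : Fin s → Bool, V (k + 1) (P.δ ⟨k, hk⟩ v z)
        = (∑ z : Fin s → Bool, g v z) * cx := by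
      rw [Finset.sum_mul]
      exact Finset.sum_congr rfl fun z _ => hVg v z
    rw [e1, e2]
    ring
  have hdiff : (∑ i : Fin (3 * s) → Bool, ∑ y : Fin n → Fin d → Bool,
        ∑ x : Fin n → Fin s → Bool, P.fn (hybIn Ext (k + 1) i y x))
      - (∑ i : Fin (3 * s) → Bool, ∑ y : Fin n → Fin d → Bool,
        ∑ x : Fin n → Fin s → Bool, P.fn (hybIn Ext k i y x))
      = cx * ∑ v, ∑ i : Fin (3 * s) → Bool,
          N v i * ((∑ z' : Fin d → Bool, g v (Ext i z')) / 2 ^ d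
            - (∑ z : Fin s → Bool, g v z) / 2 ^ s) := by
    rw [Finset.sum_congr rfl fun i _ => Finset.sum_congr rfl fun y _ => hinner (k + 1) (by omega) i y,
      Finset.sum_congr rfl fun i _ => Finset.sum_congr rfl fun y _ => hinner k (by omega) i y,
      Finset.sum_congr rfl fun i _ => hAk1 i,
      Finset.sum_congr rfl fun i _ => hAk i,
      ← Finset.sum_sub_distrib]
    rw [Finset.sum_congr rfl fun i _ => (Finset.sum_sub_distrib (s := Finset.univ) _ _).symm]
    rw [Finset.sum_congr rfl fun i _ => Finset.sum_congr rfl fun v _ => hterm v i]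
    rw [Finset.sum_comm, Finset.mul_sum]
    exact Finset.sum_congr rfl fun v _ => by rw [Finset.mul_sum]
  -- apply the key layer bound
  have hNsum : ∀ i : Fin (3 * s) → Bool, ∑ v, N v i = cy := by
    intro i
    rw [hNdef]
    simp only
    rw [Finset.sum_comm]
    have h4 : ∀ y : Fin n → Fin d → Bool,
        ∑ v, (if Sst P Ext i y k = v then (1:ℝ) else 0) = 1 := by
      intro y
      simp
    rw [Finset.sum_congr rfl fun y _ => h4 y, Finset.sum_const, Finset.card_univ, nsmul_eq_mul,
      mul_one, hcy]
  have hN0 : ∀ v i, 0 ≤ N v i := by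
    intro v i
    rw [hNdef]
    refine Finset.sum_nonneg fun y _ => by split <;> norm_num
  have hg01 : ∀ v z, 0 ≤ g v z ∧ g v z ≤ 1 := by
    intro v z
    rw [hgdef]
    constructor
    · exact div_nonneg (hV0 _ _) hcx0.le
    · rw [div_le_one hcx0]
      exact hVle _ _
  have hkey := key_layer hw hs hwle hε' Ext hExt cy hcy0 N hN0 hNsum g hg01
  rw [hdiff, abs_mul, abs_of_pos hcx0]
  calc cx * |∑ v, ∑ i : Fin (3 * s) → Bool,
        N v i * ((∑ z' : Fin d → Bool, g v (Ext i z')) / 2 ^ d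
          - (∑ z : Fin s → Bool, g v z) / 2 ^ s)|
      ≤ cx * (3 * ε' * (2 ^ (3 * s) * cy)) := mul_le_mul_of_nonneg_left hkey hcx0.le
    _ = 3 * ε' * ((2:ℝ) ^ (3 * s) * cy * cx) := by ring

end WPRAux4

set_option maxHeartbeats 1600000 in
-- STATEMENT 3
theorem stmt3 (w n s d : ℕ) (hw : 0 < w) (hn : 0 < n) (hs : 0 < s) (hd : 0 < d)
    (hsw : logb 2 (w : ℝ) ≤ (s : ℝ)) (ε : ℝ) (hε : 0 < ε) (hε1 : ε < 1)
    (Ext : (Fin (3 * s) → Bool) → (Fin d → Bool) → (Fin s → Bool))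
    (hExt : IsExtractor (3 * s) d s Ext (2 * (s : ℝ)) (ε / (3 * n))) :
    ∃ (R : (Fin n → Fin d → Bool) → (Fin (3 * s) → Bool) → Fin n → Fin s → Bool)
      (σ : (Fin (3 * s) → Bool) → ℝ),
      IsWPR (Bclass n s w) (Bclass n d w) R σ 1 ε := by
  classical
  have hwle : w ≤ 2 ^ s := by
    have h1 : (w:ℝ) ≤ (2:ℝ) ^ (s:ℝ) :=
      (Real.logb_le_iff_le_rpow (by norm_num) (by exact_mod_cast hw)).mp hsw
    have h2 : (2:ℝ) ^ (s:ℝ) = ((2 ^ s : ℕ) : ℝ) := by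
      rw [Real.rpow_natCast]
      push_cast
      ring
    rw [h2] at h1
    exact_mod_cast h1
  have hε'0 : (0:ℝ) ≤ ε / (3 * n) := by positivity
  refine ⟨fun y i j => Ext i (y j), fun _ => (1:ℝ), ?_, fun i => by norm_num, ?_⟩
  · -- the approximation property
    intro f hf
    obtain ⟨P, rfl⟩ := hf
    have hcI0 : (0:ℝ) < (Fintype.card (Fin (3 * s) → Bool) : ℝ) := by
      exact_mod_cast Fintype.card_pos
    have hcy0 : (0:ℝ) < (Fintype.card (Fin n → Fin d → Bool) : ℝ) := by
      exact_mod_cast Fintype.card_pos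
    have hcx0 : (0:ℝ) < (Fintype.card (Fin n → Fin s → Bool) : ℝ) := by
      exact_mod_cast Fintype.card_pos
    have hcI2s : (Fintype.card (Fin (3 * s) → Bool) : ℝ) = 2 ^ (3 * s) := by simp
    set G : ℕ → ℝ := fun k =>
      (∑ i : Fin (3 * s) → Bool, ∑ y : Fin n → Fin d → Bool, ∑ x : Fin n → Fin s → Bool,
        P.fn (hybIn Ext k i y x))
      / ((Fintype.card (Fin (3 * s) → Bool) : ℝ) * (Fintype.card (Fin n → Fin d → Bool))
          * (Fintype.card (Fin n → Fin s → Bool))) with hG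
    have hG0 : uniformExp P.fn = G 0 := by
      rw [hG]
      simp only
      unfold uniformExp
      have h1 : ∀ (i : Fin (3 * s) → Bool) (y : Fin n → Fin d → Bool),
          (∑ x : Fin n → Fin s → Bool, P.fn (hybIn Ext 0 i y x))
            = ∑ x : Fin n → Fin s → Bool, P.fn x := by
        intro i y
        refine Finset.sum_congr rfl fun x _ => ?_
        have hx : hybIn Ext 0 i y x = x := by
          funext j
          simp [hybIn]
        rw [hx]
      rw [Finset.sum_congr rfl fun i (_ : i ∈ Finset.univ) =>
        Finset.sum_congr rfl fun y (_ : y ∈ Finset.univ) => h1 i y]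
      rw [Finset.sum_congr rfl fun i (_ : i ∈ Finset.univ) =>
        (by rw [Finset.sum_const, Finset.card_univ, nsmul_eq_mul] :
          (∑ _y : Fin n → Fin d → Bool, ∑ x : Fin n → Fin s → Bool, P.fn x)
            = (Fintype.card (Fin n → Fin d → Bool) : ℝ) * ∑ x : Fin n → Fin s → Bool, P.fn x)]
      rw [Finset.sum_const, Finset.card_univ, nsmul_eq_mul]
      field_simp
    have hfold : ∀ (i : Fin (3 * s) → Bool) (y : Fin n → Fin d → Bool),
        (∑ x : Fin n → Fin s → Bool, P.fn (hybIn Ext n i y x))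
          = (Fintype.card (Fin n → Fin s → Bool) : ℝ) * P.fn (fun j => Ext i (y j)) := by
      intro i y
      have h1 : ∀ x : Fin n → Fin s → Bool, hybIn Ext n i y x = fun j => Ext i (y j) := by
        intro x
        funext j
        simp [hybIn, j.isLt]
      rw [Finset.sum_congr rfl fun x (_ : x ∈ Finset.univ) => by rw [h1 x]]
      rw [Finset.sum_const, Finset.card_univ, nsmul_eq_mul]
    have hGn : uniformExp (fun i : Fin (3 * s) → Bool =>
        (1:ℝ) * uniformExp (fun y : Fin n → Fin d → Bool => P.fn (fun j => Ext i (y j))))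
          = G n := by
      rw [hG]
      simp only
      unfold uniformExp
      rw [Finset.sum_congr rfl fun i (_ : i ∈ Finset.univ) =>
        Finset.sum_congr rfl fun y (_ : y ∈ Finset.univ) => hfold i y]
      have hL : (∑ i : Fin (3 * s) → Bool, (1:ℝ)
          * ((∑ y : Fin n → Fin d → Bool, P.fn (fun j => Ext i (y j)))
              / (Fintype.card (Fin n → Fin d → Bool) : ℝ)))
          = (∑ i : Fin (3 * s) → Bool, ∑ y : Fin n → Fin d → Bool, P.fn (fun j => Ext i (y j)))
              / (Fintype.card (Fin n → Fin d → Bool) : ℝ) := by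
        rw [Finset.sum_div]
        exact Finset.sum_congr rfl fun i _ => one_mul _
      rw [hL]
      have hnum : (∑ i : Fin (3 * s) → Bool, ∑ y : Fin n → Fin d → Bool,
          (Fintype.card (Fin n → Fin s → Bool) : ℝ) * P.fn (fun j => Ext i (y j)))
          = (Fintype.card (Fin n → Fin s → Bool) : ℝ)
            * ∑ i : Fin (3 * s) → Bool, ∑ y : Fin n → Fin d → Bool,
                P.fn (fun j => Ext i (y j)) := by
        rw [Finset.mul_sum]
        exact Finset.sum_congr rfl fun i _ => by rw [Finset.mul_sum]
      rw [hnum]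
      field_simp
    have hstep : ∀ k, k < n → |G (k + 1) - G k| ≤ 3 * (ε / (3 * n)) := by
      intro k hkn
      rw [hG]
      simp only
      rw [div_sub_div_same, abs_div,
        abs_of_pos (mul_pos (mul_pos hcI0 hcy0) hcx0),
        div_le_iff₀ (mul_pos (mul_pos hcI0 hcy0) hcx0)]
      refine le_trans (step_bound hw hs hwle hε'0 Ext hExt P hkn) (le_of_eq ?_)
      rw [hcI2s]
    have htel : G n - G 0 = ∑ k ∈ Finset.range n, (G (k + 1) - G k) :=
      (Finset.sum_range_sub G n).symm
    have hbound : |G n - G 0| ≤ (n:ℝ) * (3 * (ε / (3 * n))) := by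
      rw [htel]
      calc |∑ k ∈ Finset.range n, (G (k + 1) - G k)|
          ≤ ∑ k ∈ Finset.range n, |G (k + 1) - G k| := Finset.abs_sum_le_sum_abs _ _
        _ ≤ ∑ _k ∈ Finset.range n, (3 * (ε / (3 * n))) :=
            Finset.sum_le_sum fun k hkmem => hstep k (Finset.mem_range.mp hkmem)
        _ = (n:ℝ) * (3 * (ε / (3 * n))) := by
            rw [Finset.sum_const, Finset.card_range, nsmul_eq_mul]
    have hfin : (n:ℝ) * (3 * (ε / (3 * n))) = ε := by
      have hn0 : (n:ℝ) ≠ 0 := by exact_mod_cast hn.ne'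
      field_simp
    show |uniformExp P.fn - uniformExp (fun i : Fin (3 * s) → Bool =>
        (1:ℝ) * uniformExp (fun y : Fin n → Fin d → Bool => P.fn (fun j => Ext i (y j))))| ≤ ε
    rw [hG0, hGn, abs_sub_comm]
    rw [hfin] at hbound
    exact hbound
  · -- membership in the target class
    rintro f ⟨P, rfl⟩ i
    exact ⟨⟨fun j v z => P.δ j v (Ext i z), P.start, P.accept⟩, rfl⟩
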